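/- For every integer M ≥ 2, the sum of the reciprocals of the nonzero Laplacian eigenvalues of the M-cycle satisfies Σ_{i=1}^{M−1} 1/(2 − 2·cos(2πi/M)) = (M² − 1)/12; equivalently, the average effective resistance of the cycle graph T_M equals R_ave(T_M) = M/12 − 1/(12M). -/

import Mathlib

open Real Finset

/-- Average effective resistance of the cycle graph (1-dimensional toroidal grid) `T_M`. -/
noncomputable def RaveCycle (M : ℕ) : ℝ :=
  (1 / (M : ℝ)) * ∑ i ∈ Finset.Icc 1 (M - 1),
    1 / (2 - 2 * Real.cos (2 * Real.pi * i / M))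

private lemma sumId (n : ℕ) : ∑ j ∈ range n, (j:ℂ) = n*(n-1)/2 := by
  induction n with
  | zero => simp
  | succ n ih => rw [Finset.sum_range_succ, ih]; push_cast; ring

private lemma sumSq (n : ℕ) : ∑ j ∈ range n, (j:ℂ)^2 = n*(n-1)*(2*n-1)/6 := by
  induction n with
  | zero => simp
  | succ n ih => rw [Finset.sum_range_succ, ih]; push_cast; ring

private lemma G1 (z : ℂ) (n : ℕ) : (1-z) * ∑ j ∈ range n, (j:ℂ)*z^j
    = (∑ j ∈ range n, z^j) - 1 - ((n:ℂ)-1)*z^n := by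
  induction n with
  | zero => simp
  | succ n ih =>
    rw [Finset.sum_range_succ, Finset.sum_range_succ]
    push_cast
    linear_combination ih

private lemma G2 (z : ℂ) (n : ℕ) : (1-z) * ∑ j ∈ range n, (j:ℂ)^2*z^j
    = 2 * (∑ j ∈ range n, (j:ℂ)*z^j) - ((∑ j ∈ range n, z^j) - 1) - ((n:ℂ)-1)^2*z^n := by
  induction n with
  | zero => simp
  | succ n ih =>
    rw [Finset.sum_range_succ, Finset.sum_range_succ, Finset.sum_range_succ]
    push_cast
    linear_combination ih

private lemma geomZero (M : ℕ) (x : ℂ) (hx1 : x ≠ 1) (hxM : x^M = 1) :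
    ∑ k ∈ range M, x^k = 0 := by
  have := geom_sum_mul x M
  rw [hxM, sub_self] at this
  rcases mul_eq_zero.1 this with h | h
  · exact h
  · exact absurd (by linear_combination h) hx1

private lemma key (M : ℕ) (z : ℂ) (hz1 : z ≠ 1) (hz0 : z ≠ 0) (hzM : z^M = 1) :
    (2 - z - z⁻¹) * ∑ j ∈ range M, (j:ℂ)*((M:ℂ)-j)/2 * z^j = -M := by
  have hP : ∑ j ∈ range M, z^j = 0 := geomZero M z hz1 hzM
  have h1 : (1-z) * ∑ j ∈ range M, (j:ℂ)*z^j = -(M:ℂ) := by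
    rw [G1, hP, hzM]; ring
  have h2 : (1-z) * ∑ j ∈ range M, (j:ℂ)^2*z^j
      = 2 * (∑ j ∈ range M, (j:ℂ)*z^j) + 1 - ((M:ℂ)-1)^2 := by
    rw [G2, hP, hzM]; ring
  have hS : 2 * (∑ j ∈ range M, (j:ℂ)*((M:ℂ)-j)/2 * z^j)
      = (M:ℂ) * (∑ j ∈ range M, (j:ℂ)*z^j) - ∑ j ∈ range M, (j:ℂ)^2*z^j := by
    rw [Finset.mul_sum, Finset.mul_sum, ← Finset.sum_sub_distrib]
    exact Finset.sum_congr rfl fun j _ => by ring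
  have hsq : (1-z)^2 * (∑ j ∈ range M, (j:ℂ)*((M:ℂ)-j)/2 * z^j) = (M:ℂ) * z := by
    linear_combination ((1-z)^2/2) * hS + ((M:ℂ)*(1-z)/2 - 1) * h1 - ((1-z)/2) * h2
  have hinv : z * z⁻¹ = 1 := mul_inv_cancel₀ hz0
  have hfin : ((2 - z - z⁻¹) * ∑ j ∈ range M, (j:ℂ)*((M:ℂ)-j)/2 * z^j) * z
      = (-(M:ℂ)) * z := by
    linear_combination -hsq - (∑ j ∈ range M, (j:ℂ)*((M:ℂ)-j)/2 * z^j) * hinv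
  exact mul_right_cancel₀ hz0 hfin

theorem cycle_resistance (M : ℕ) (hM : 2 ≤ M) :
    (∑ i ∈ Finset.Icc 1 (M - 1), 1 / (2 - 2 * Real.cos (2 * Real.pi * i / M))
      = ((M : ℝ) ^ 2 - 1) / 12) ∧
    RaveCycle M = (M : ℝ) / 12 - 1 / (12 * M) := by
  have hM0 : (M:ℝ) ≠ 0 := by positivity
  have hMC : (M:ℂ) ≠ 0 := by exact_mod_cast hM0
  set w : ℂ := Complex.exp (2 * Real.pi * Complex.I / M) with hw
  have hprim : IsPrimitiveRoot w M := Complex.isPrimitiveRoot_exp M (by omega)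
  have hw0 : w ≠ 0 := Complex.exp_ne_zero _
  have hwM : w ^ M = 1 := hprim.pow_eq_one
  have hins : Finset.range M = insert 0 (Finset.Icc 1 (M-1)) := by
    ext x
    simp only [Finset.mem_range, Finset.mem_insert, Finset.mem_Icc]
    omega
  have h0ni : (0:ℕ) ∉ Finset.Icc 1 (M-1) := by simp
  -- per-term identity
  have hterm : ∀ k ∈ Finset.Icc 1 (M-1),
      ((1 / (2 - 2 * Real.cos (2 * Real.pi * k / M)) : ℝ) : ℂ)
        = -(1/(M:ℂ)) * ∑ j ∈ range M, (j:ℂ)*((M:ℂ)-j)/2 * (w^k)^j := by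
    intro k hk
    simp only [Finset.mem_Icc] at hk
    have hk1 : 1 ≤ k := hk.1
    have hkM : k < M := by omega
    set θ : ℝ := 2 * Real.pi * k / M with hθ
    have hz1 : w^k ≠ 1 := hprim.pow_ne_one_of_pos_of_lt (by omega) hkM
    have hz0 : w^k ≠ 0 := pow_ne_zero _ hw0
    have hzM : (w^k)^M = 1 := by rw [← pow_mul, mul_comm, pow_mul, hwM, one_pow]
    have hzexp : w^k = Complex.exp ((θ:ℂ) * Complex.I) := by
      rw [hw, ← Complex.exp_nat_mul]
      congr 1
      push_cast [hθ]
      ring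
    have hcos : ((2 - 2 * Real.cos θ : ℝ) : ℂ) = 2 - w^k - (w^k)⁻¹ := by
      push_cast [Complex.ofReal_cos]
      rw [Complex.cos, hzexp, ← Complex.exp_neg]
      ring
    have hrne : (2 - 2 * Real.cos θ) ≠ 0 := by
      have hθpos : 0 < θ := by
        rw [hθ]
        have hk' : (0:ℝ) < (k:ℝ) := by exact_mod_cast hk1
        positivity
      have hθlt : θ < 2 * Real.pi := by
        rw [hθ, div_lt_iff₀ (by positivity)]
        have hk' : (k:ℝ) < (M:ℝ) := by exact_mod_cast hkM
        nlinarith [Real.pi_pos]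
      have hcne : Real.cos θ ≠ 1 := by
        intro h
        rw [Real.cos_eq_one_iff_of_lt_of_lt (by linarith [Real.pi_pos]) hθlt] at h
        linarith
      intro h
      exact hcne (by linarith)
    have h2z : (2 - w^k - (w^k)⁻¹) ≠ 0 := by
      rw [← hcos]
      exact_mod_cast hrne
    have hkey := key M (w^k) hz1 hz0 hzM
    have hS' : ∑ j ∈ range M, (j:ℂ)*((M:ℂ)-j)/2 * (w^k)^j
        = -(M:ℂ) / (2 - w^k - (w^k)⁻¹) := by
      rw [eq_div_iff h2z]
      linear_combination hkey
    calc ((1 / (2 - 2 * Real.cos θ) : ℝ) : ℂ)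
        = 1 / ((2 - 2 * Real.cos θ : ℝ) : ℂ) := by push_cast; ring
      _ = 1 / (2 - w^k - (w^k)⁻¹) := by rw [hcos]
      _ = -(1/(M:ℂ)) * ∑ j ∈ range M, (j:ℂ)*((M:ℂ)-j)/2 * (w^k)^j := by
          rw [hS']
          field_simp
  -- complex sum computation
  have hC : ∑ k ∈ Finset.Icc 1 (M-1),
      ((1 / (2 - 2 * Real.cos (2 * Real.pi * k / M)) : ℝ) : ℂ)
      = ((M:ℂ)^2 - 1)/12 := by
    rw [Finset.sum_congr rfl hterm]
    have hswap : ∑ k ∈ Finset.Icc 1 (M-1),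
        (-(1/(M:ℂ)) * ∑ j ∈ range M, (j:ℂ)*((M:ℂ)-j)/2 * (w^k)^j)
        = -(1/(M:ℂ)) * ∑ j ∈ range M, ((j:ℂ)*((M:ℂ)-j)/2 *
            ∑ k ∈ Finset.Icc 1 (M-1), (w^j)^k) := by
      rw [← Finset.mul_sum]
      congr 1
      rw [Finset.sum_comm]
      refine Finset.sum_congr rfl fun k _ => ?_
      rw [Finset.mul_sum]
      refine Finset.sum_congr rfl fun j _ => ?_
      rw [← pow_mul, ← pow_mul, mul_comm j k]
    rw [hswap]
    have hinner : ∀ j ∈ range M,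
        (j:ℂ)*((M:ℂ)-j)/2 * (∑ k ∈ Finset.Icc 1 (M-1), (w^j)^k)
          = -((j:ℂ)*((M:ℂ)-j)/2) := by
      intro j hj
      rcases Nat.eq_zero_or_pos j with rfl | hjpos
      · simp
      · have hj1 : w^j ≠ 1 :=
          hprim.pow_ne_one_of_pos_of_lt hjpos.ne' (Finset.mem_range.1 hj)
        have hjM : (w^j)^M = 1 := by rw [← pow_mul, mul_comm, pow_mul, hwM, one_pow]
        have h0 : ∑ k ∈ range M, (w^j)^k = 0 := geomZero M (w^j) hj1 hjM
        rw [hins, Finset.sum_insert h0ni] at h0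
        have hs : ∑ k ∈ Finset.Icc 1 (M-1), (w^j)^k = -1 := by
          linear_combination h0
        rw [hs]; ring
    rw [Finset.sum_congr rfl hinner, Finset.sum_neg_distrib]
    have hsplit : ∑ j ∈ range M, (j:ℂ)*((M:ℂ)-j)/2
        = ((M:ℂ) * (∑ j ∈ range M, (j:ℂ)) - ∑ j ∈ range M, (j:ℂ)^2)/2 := by
      rw [eq_div_iff (by norm_num : (2:ℂ) ≠ 0), Finset.sum_mul, Finset.mul_sum,
        ← Finset.sum_sub_distrib]
      exact Finset.sum_congr rfl fun j _ => by ring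
    rw [hsplit, sumId, sumSq]
    field_simp
    ring
  constructor
  · exact_mod_cast hC
  · have h1 : ∑ i ∈ Finset.Icc 1 (M - 1), 1 / (2 - 2 * Real.cos (2 * Real.pi * i / M))
        = ((M : ℝ) ^ 2 - 1) / 12 := by exact_mod_cast hC
    rw [RaveCycle, h1]
    field_simp
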